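/- Let q and q′ be Lorentzian quadratic forms on a real vector space V of dimension n+1 (n ≥ 1), let X be timelike for q and X′ timelike for q′, and let V^{q+} and V^{q′+} denote the corresponding future light cones (determined by X and X′ respectively). If V^{q+} ∩ V^{q′+} ≠ ∅, then there exist a Lorentzian quadratic form h on V and a vector Y timelike for h such that the future light cone V^{h+} of h determined by Y satisfies V^{h+} ⊆ V^{q+} ∩ V^{q′+}; in particular h ⪯ q and h ⪯ q′. (Pointwise core of Proposition 4.4: if the future cones of two globally hyperbolic metrics intersect at every point, one can fit a metric with smaller cones inside both.) -/

import Mathlib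

/-- The standard Minkowski quadratic form of signature `(-,+,…,+)` on `ℝ^(n+1)`. -/
def mink (n : ℕ) (x : Fin (n + 1) → ℝ) : ℝ :=
  ∑ i, (if i = 0 then (-1 : ℝ) else 1) * x i ^ 2

/-- A function `f : V → ℝ` is Lorentzian if it is equivalent (isometric) to the
standard Minkowski quadratic form on `ℝ^(n+1)`. -/
def IsLorentzian {V : Type*} [AddCommGroup V] [Module ℝ V] (n : ℕ) (f : V → ℝ) : Prop :=
  ∃ e : (Fin (n + 1) → ℝ) ≃ₗ[ℝ] V, ∀ x, f (e x) = mink n x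

/-- The polar (associated symmetric bilinear) form `B` of a quadratic form `q`,
normalized so that `B(v,v) = q(v)`. -/
noncomputable def polarForm {V : Type*} [AddCommGroup V] [Module ℝ V]
    (q : QuadraticForm ℝ V) (v w : V) : ℝ :=
  (q (v + w) - q v - q w) / 2

namespace Prop44

variable {V : Type*} [AddCommGroup V] [Module ℝ V]

lemma polarForm_eq (q : QuadraticForm ℝ V) (v w : V) :
    polarForm q v w = QuadraticMap.polar ⇑q v w / 2 := rfl

lemma pf_expand (q : QuadraticForm ℝ V) (v w : V) :
    q (v + w) = q v + q w + 2 * polarForm q v w := by unfold polarForm; ring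

lemma pf_comm (q : QuadraticForm ℝ V) (v w : V) :
    polarForm q v w = polarForm q w v := by unfold polarForm; rw [add_comm]; ring

lemma pf_self (q : QuadraticForm ℝ V) (v : V) : polarForm q v v = q v := by
  unfold polarForm
  have : v + v = (2:ℝ) • v := by rw [two_smul]
  rw [this, QuadraticMap.map_smul]
  norm_num; ring

lemma pf_add_right (q : QuadraticForm ℝ V) (v a b : V) :
    polarForm q v (a + b) = polarForm q v a + polarForm q v b := by
  rw [polarForm_eq, polarForm_eq, polarForm_eq, QuadraticMap.polar_add_right]; ring

lemma pf_smul_right (q : QuadraticForm ℝ V) (v : V) (r : ℝ) (a : V) :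
    polarForm q v (r • a) = r * polarForm q v a := by
  rw [polarForm_eq, polarForm_eq, QuadraticMap.polar_smul_right]
  simp [smul_eq_mul]; ring

lemma pf_add_left (q : QuadraticForm ℝ V) (a b v : V) :
    polarForm q (a + b) v = polarForm q a v + polarForm q b v := by
  rw [pf_comm, pf_add_right, pf_comm q v a, pf_comm q v b]

lemma pf_smul_left (q : QuadraticForm ℝ V) (r : ℝ) (a v : V) :
    polarForm q (r • a) v = r * polarForm q a v := by
  rw [pf_comm, pf_smul_right, pf_comm]

/-- polarForm as a linear map in the second variable. -/
noncomputable def pfLin (q : QuadraticForm ℝ V) (v : V) : V →ₗ[ℝ] ℝ where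
  toFun := fun w => polarForm q v w
  map_add' := pf_add_right q v
  map_smul' := fun r a => pf_smul_right q v r a

@[simp] lemma pfLin_apply (q : QuadraticForm ℝ V) (v w : V) :
    pfLin q v w = polarForm q v w := rfl

/-- The polar bilinear form of `mink`. -/
def B0 (n : ℕ) (a b : Fin (n + 1) → ℝ) : ℝ :=
  ∑ i, (if i = 0 then (-1 : ℝ) else 1) * (a i * b i)

lemma mink_add (n : ℕ) (a b : Fin (n + 1) → ℝ) :
    mink n (a + b) = mink n a + mink n b + 2 * B0 n a b := by
  unfold mink B0
  rw [Finset.mul_sum, ← Finset.sum_add_distrib, ← Finset.sum_add_distrib]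
  refine Finset.sum_congr rfl fun i _ => ?_
  simp only [Pi.add_apply]; ring

lemma mink_smul (n : ℕ) (r : ℝ) (a : Fin (n + 1) → ℝ) :
    mink n (r • a) = r ^ 2 * mink n a := by
  unfold mink
  rw [Finset.mul_sum]
  refine Finset.sum_congr rfl fun i _ => ?_
  simp only [Pi.smul_apply, smul_eq_mul]; ring

lemma B0_add_right (n : ℕ) (u a b : Fin (n + 1) → ℝ) :
    B0 n u (a + b) = B0 n u a + B0 n u b := by
  unfold B0
  rw [← Finset.sum_add_distrib]
  refine Finset.sum_congr rfl fun i _ => ?_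
  simp only [Pi.add_apply]; ring

lemma B0_smul_right (n : ℕ) (r : ℝ) (a b : Fin (n + 1) → ℝ) :
    B0 n a (r • b) = r * B0 n a b := by
  unfold B0
  rw [Finset.mul_sum]
  refine Finset.sum_congr rfl fun i _ => ?_
  simp only [Pi.smul_apply, smul_eq_mul]; ring

lemma B0_comm (n : ℕ) (a b : Fin (n + 1) → ℝ) : B0 n a b = B0 n b a := by
  unfold B0
  refine Finset.sum_congr rfl fun i _ => ?_
  ring

lemma B0_self (n : ℕ) (a : Fin (n + 1) → ℝ) : B0 n a a = mink n a := by
  unfold B0 mink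
  refine Finset.sum_congr rfl fun i _ => ?_
  ring

lemma continuous_mink (n : ℕ) : Continuous (mink n) := by
  unfold mink
  exact continuous_finset_sum _ fun i _ => continuous_const.mul ((continuous_apply i).pow 2)

lemma mink_zero (n : ℕ) : mink n 0 = 0 := by simp [mink]

lemma mink_expand (n : ℕ) (z : Fin (n + 1) → ℝ) :
    mink n z = -(z 0 ^ 2) + ∑ i : Fin n, z i.succ ^ 2 := by
  unfold mink
  rw [Fin.sum_univ_succ]
  simp [Fin.succ_ne_zero]

lemma B0_expand (n : ℕ) (u y : Fin (n + 1) → ℝ) :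
    B0 n u y = -(u 0 * y 0) + ∑ i : Fin n, u i.succ * y i.succ := by
  unfold B0
  rw [Fin.sum_univ_succ]
  simp [Fin.succ_ne_zero]

/-- Key definiteness lemma: `mink` is positive definite on the orthogonal complement
of a timelike vector. -/
lemma mink_orth_eq_zero {n : ℕ} {u y : Fin (n + 1) → ℝ} (hu : mink n u < 0)
    (hperp : B0 n u y = 0) (hy : mink n y ≤ 0) : y = 0 := by
  rw [mink_expand] at hu hy
  rw [B0_expand] at hperp
  set A := ∑ i : Fin n, u i.succ ^ 2 with hA
  set Yv := ∑ i : Fin n, y i.succ ^ 2 with hYv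
  set Bv := ∑ i : Fin n, u i.succ * y i.succ with hBv
  have hA0 : 0 ≤ A := Finset.sum_nonneg fun i _ => sq_nonneg _
  have hYv0 : 0 ≤ Yv := Finset.sum_nonneg fun i _ => sq_nonneg _
  have hu0 : A < u 0 ^ 2 := by linarith
  have hCS : Bv ^ 2 ≤ A * Yv := Finset.sum_mul_sq_le_sq_mul_sq _ _ _
  have hB : u 0 * y 0 = Bv := by linarith
  have hy0 : Yv ≤ y 0 ^ 2 := by linarith
  have hYvz : Yv = 0 := by
    by_contra hne
    have hYvpos : 0 < Yv := lt_of_le_of_ne hYv0 (Ne.symm hne)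
    have h1 : u 0 ^ 2 * y 0 ^ 2 = Bv ^ 2 := by rw [← hB]; ring
    have h2 : A * Yv < u 0 ^ 2 * Yv := mul_lt_mul_of_pos_right hu0 hYvpos
    have h3 : u 0 ^ 2 * Yv ≤ u 0 ^ 2 * y 0 ^ 2 :=
      mul_le_mul_of_nonneg_left hy0 (sq_nonneg _)
    linarith
  have hsucc : ∀ i : Fin n, y i.succ = 0 := by
    intro i
    have := (Finset.sum_eq_zero_iff_of_nonneg
      (fun j (_ : j ∈ Finset.univ) => sq_nonneg (y j.succ))).mp hYvz i (Finset.mem_univ i)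
    exact pow_eq_zero_iff (two_ne_zero) |>.mp this
  have hBvz : Bv = 0 := by
    rw [hBv]; exact Finset.sum_eq_zero fun i _ => by rw [hsucc i, mul_zero]
  have hu0ne : u 0 ≠ 0 := by
    intro h; rw [h] at hu0; simp at hu0; linarith
  have hy00 : y 0 = 0 := by
    have : u 0 * y 0 = 0 := by rw [hB, hBvz]
    rcases mul_eq_zero.mp this with h | h
    · exact absurd h hu0ne
    · exact h
  funext i
  refine Fin.cases ?_ ?_ i
  · exact hy00
  · intro j; exact hsucc j

end Prop44

open Prop44

set_option maxHeartbeats 1000000 in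
/-- Pointwise core of Proposition 4.4. -/
theorem exists_lorentzian_form_inside_future_cones {n : ℕ} (hn : 1 ≤ n)
    {V : Type*} [AddCommGroup V] [Module ℝ V]
    (q q' : QuadraticForm ℝ V)
    (hq : IsLorentzian n ⇑q) (hq' : IsLorentzian n ⇑q')
    (X X' : V) (hX : q X < 0) (hX' : q' X' < 0)
    (hne : ({v : V | q v < 0 ∧ polarForm q X v < 0} ∩
      {v : V | q' v < 0 ∧ polarForm q' X' v < 0}).Nonempty) :
    ∃ (h : QuadraticForm ℝ V) (Y : V),
      IsLorentzian n ⇑h ∧ h Y < 0 ∧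
        {v : V | h v < 0 ∧ polarForm h Y v < 0} ⊆
          {v : V | q v < 0 ∧ polarForm q X v < 0} ∩
            {v : V | q' v < 0 ∧ polarForm q' X' v < 0} ∧
        {v : V | h v < 0} ⊆ {v : V | q v < 0} ∧
        {v : V | h v < 0} ⊆ {v : V | q' v < 0} := by
  classical
  obtain ⟨w, ⟨hw1, hw2⟩, hw3, hw4⟩ := hne
  obtain ⟨e, he⟩ := hq
  -- normalize w to a q-unit timelike vector w₁
  obtain ⟨s, hs, hs2⟩ : ∃ s : ℝ, 0 < s ∧ s ^ 2 = -q w :=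
    ⟨Real.sqrt (-q w), Real.sqrt_pos.mpr (by linarith), Real.sq_sqrt (by linarith)⟩
  set w₁ : V := s⁻¹ • w with hw₁_def
  have hqw₁ : q w₁ = -1 := by
    rw [hw₁_def, QuadraticMap.map_smul, smul_eq_mul]
    have hqw : q w = -(s ^ 2) := by linarith
    rw [hqw]
    have hsne : s ≠ 0 := hs.ne'
    field_simp
  have hw₁X : polarForm q X w₁ < 0 := by
    rw [hw₁_def, pf_smul_right]
    exact mul_neg_of_pos_of_neg (inv_pos.mpr hs) hw2
  have hw₁q' : q' w₁ < 0 := by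
    rw [hw₁_def, QuadraticMap.map_smul, smul_eq_mul]
    exact mul_neg_of_pos_of_neg (mul_pos (inv_pos.mpr hs) (inv_pos.mpr hs)) hw3
  have hw₁X' : polarForm q' X' w₁ < 0 := by
    rw [hw₁_def, pf_smul_right]
    exact mul_neg_of_pos_of_neg (inv_pos.mpr hs) hw4
  clear_value w₁
  clear hw₁_def hs hs2 hw1 hw2 hw3 hw4
  set u : Fin (n + 1) → ℝ := e.symm w₁ with hu_def
  have heu : e u = w₁ := e.apply_symm_apply w₁
  clear_value u
  clear hu_def
  have hminku : mink n u = -1 := by rw [← he u, heu, hqw₁]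
  have pfB0 : ∀ a b, polarForm q (e a) (e b) = B0 n a b := by
    intro a b
    unfold polarForm
    rw [← map_add e, he, he, he, mink_add]
    ring
  -- linear functionals in coordinates
  set lX : (Fin (n + 1) → ℝ) →ₗ[ℝ] ℝ := (pfLin q X).comp e.toLinearMap with hlX_def
  set lX' : (Fin (n + 1) → ℝ) →ₗ[ℝ] ℝ := (pfLin q' X').comp e.toLinearMap with hlX'_def
  have hlXapp : ∀ x, lX x = polarForm q X (e x) := fun x => rfl
  have hlX'app : ∀ x, lX' x = polarForm q' X' (e x) := fun x => rfl
  have hlXc : Continuous lX := lX.continuous_of_finiteDimensional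
  have hlX'c : Continuous lX' := lX'.continuous_of_finiteDimensional
  clear_value lX lX'
  clear hlX_def hlX'_def
  -- continuity of q' in coordinates
  have hQ'c : Continuous fun x : Fin (n + 1) → ℝ => q' (e x) := by
    set Glin : (Fin (n + 1) → ℝ) →ₗ[ℝ] (Fin (n + 1) → ℝ) →ₗ[ℝ] ℝ :=
      LinearMap.mk₂ ℝ (fun a b => polarForm q' (e a) (e b))
        (fun a a' b => by
          show polarForm q' (e (a + a')) (e b) = _
          rw [map_add, pf_add_left])
        (fun r a b => by
          show polarForm q' (e (r • a)) (e b) = r • polarForm q' (e a) (e b)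
          rw [map_smul, pf_smul_left, smul_eq_mul])
        (fun a b b' => by
          show polarForm q' (e a) (e (b + b')) = _
          rw [map_add, pf_add_right])
        (fun r a b => by
          show polarForm q' (e a) (e (r • b)) = r • polarForm q' (e a) (e b)
          rw [map_smul, pf_smul_right, smul_eq_mul]) with hGlin
    set G : (Fin (n + 1) → ℝ) →ₗ[ℝ] (Fin (n + 1) → ℝ) →L[ℝ] ℝ :=
      (LinearMap.toContinuousLinearMap.toLinearMap).comp Glin with hG
    have hGc : Continuous G := G.continuous_of_finiteDimensional
    have key : ∀ x, q' (e x) = (G x) x := by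
      intro x
      have h1 : (G x) x = Glin x x := by
        simp [hG, LinearMap.coe_comp, Function.comp_apply]
      rw [h1]
      simp only [hGlin, LinearMap.mk₂_apply]
      rw [pf_self]
    have hc : Continuous fun x : Fin (n + 1) → ℝ => (G x) x :=
      isBoundedBilinearMap_apply.continuous.comp (hGc.prodMk continuous_id)
    exact hc.congr fun x => (key x).symm
  -- the open target set in coordinates
  set U : Set (Fin (n + 1) → ℝ) :=
    {x | mink n x < 0 ∧ lX x < 0 ∧ q' (e x) < 0 ∧ lX' x < 0} with hU_def
  have hUmem : ∀ x, x ∈ U ↔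
      (mink n x < 0 ∧ lX x < 0 ∧ q' (e x) < 0 ∧ lX' x < 0) := fun x => Iff.rfl
  have hUopen : IsOpen U := by
    rw [hU_def]
    have h1 : IsOpen {x : Fin (n + 1) → ℝ | mink n x < 0} :=
      isOpen_lt (continuous_mink n) continuous_const
    have h2 : IsOpen {x : Fin (n + 1) → ℝ | lX x < 0} := isOpen_lt hlXc continuous_const
    have h3 : IsOpen {x : Fin (n + 1) → ℝ | q' (e x) < 0} := isOpen_lt hQ'c continuous_const
    have h4 : IsOpen {x : Fin (n + 1) → ℝ | lX' x < 0} := isOpen_lt hlX'c continuous_const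
    exact h1.and (h2.and (h3.and h4))
  clear_value U
  clear hU_def
  have huU : u ∈ U := by
    rw [hUmem]
    refine ⟨by rw [hminku]; norm_num, ?_, ?_, ?_⟩
    · rw [hlXapp, heu]; exact hw₁X
    · rw [heu]; exact hw₁q'
    · rw [hlX'app, heu]; exact hw₁X'
  have hUcone : ∀ a : ℝ, 0 < a → ∀ z ∈ U, a • z ∈ U := by
    intro a ha z hz
    rw [hUmem] at hz ⊢
    obtain ⟨hz1, hz2, hz3, hz4⟩ := hz
    refine ⟨?_, ?_, ?_, ?_⟩
    · rw [mink_smul]; exact mul_neg_of_pos_of_neg (pow_pos ha 2) hz1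
    · rw [map_smul, smul_eq_mul]; exact mul_neg_of_pos_of_neg ha hz2
    · rw [map_smul, QuadraticMap.map_smul, smul_eq_mul]
      exact mul_neg_of_pos_of_neg (mul_pos ha ha) hz3
    · rw [map_smul, smul_eq_mul]; exact mul_neg_of_pos_of_neg ha hz4
  -- the compact family
  have hB0c : Continuous fun x => B0 n u x := by
    unfold B0
    exact continuous_finset_sum _ fun i _ =>
      continuous_const.mul (continuous_const.mul (continuous_apply i))
  set Kf : ℕ → Set (Fin (n + 1) → ℝ) := fun k =>
    {x | x ∈ Metric.sphere (0 : Fin (n + 1) → ℝ) 1 ∧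
      mink n x + (1 - (((k : ℝ) + 1)⁻¹) ^ 2) * (B0 n u x) ^ 2 ≤ 0 ∧ B0 n u x ≤ 0}
    with hKf_def
  have hKmem : ∀ k x, x ∈ Kf k ↔
      (x ∈ Metric.sphere (0 : Fin (n + 1) → ℝ) 1 ∧
        mink n x + (1 - (((k : ℝ) + 1)⁻¹) ^ 2) * (B0 n u x) ^ 2 ≤ 0 ∧ B0 n u x ≤ 0) :=
    fun k x => Iff.rfl
  have hKclosed : ∀ k, IsClosed (Kf k) := by
    intro k
    rw [hKf_def]
    have h1 : IsClosed {x : Fin (n + 1) → ℝ | x ∈ Metric.sphere (0 : Fin (n + 1) → ℝ) 1} :=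
      Metric.isClosed_sphere
    have h2 : IsClosed
        {x : Fin (n + 1) → ℝ |
          mink n x + (1 - (((k : ℝ) + 1)⁻¹) ^ 2) * (B0 n u x) ^ 2 ≤ 0} :=
      isClosed_le (((continuous_mink n).add (continuous_const.mul (hB0c.pow 2)))) continuous_const
    have h3 : IsClosed {x : Fin (n + 1) → ℝ | B0 n u x ≤ 0} :=
      isClosed_le hB0c continuous_const
    exact h1.inter (h2.inter h3)
  clear_value Kf
  clear hKf_def
  have hKcpt : ∀ k, IsCompact (Kf k) := by
    intro k
    refine (isCompact_sphere (0 : Fin (n + 1) → ℝ) 1).of_isClosed_subset (hKclosed k) ?_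
    intro x hx
    exact ((hKmem k x).mp hx).1
  have hKmono : ∀ i j : ℕ, i ≤ j → Kf j ⊆ Kf i := by
    intro i j hij x hx
    rw [hKmem] at hx ⊢
    obtain ⟨hx1, hx2, hx3⟩ := hx
    refine ⟨hx1, ?_, hx3⟩
    have hcij : (1 : ℝ) - (((i : ℝ) + 1)⁻¹) ^ 2 ≤ 1 - (((j : ℝ) + 1)⁻¹) ^ 2 := by
      have h1 : ((j : ℝ) + 1)⁻¹ ≤ ((i : ℝ) + 1)⁻¹ := by
        apply inv_anti₀
        · positivity
        · have : (i : ℝ) ≤ (j : ℝ) := Nat.cast_le.mpr hij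
          linarith
      have h2 : (((j : ℝ) + 1)⁻¹) ^ 2 ≤ (((i : ℝ) + 1)⁻¹) ^ 2 := by
        apply pow_le_pow_left₀ (by positivity) h1
      linarith
    nlinarith [sq_nonneg (B0 n u x)]
  have hKdir : Directed (· ⊇ ·) Kf := fun i j =>
    ⟨max i j, hKmono i (max i j) (le_max_left i j), hKmono j (max i j) (le_max_right i j)⟩
  have hInter : (⋂ k, Kf k) ⊆ U := by
    intro x hx
    simp only [Set.mem_iInter] at hx
    have hx' : ∀ i : ℕ, x ∈ Metric.sphere (0 : Fin (n + 1) → ℝ) 1 ∧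
        mink n x + (1 - (((i : ℝ) + 1)⁻¹) ^ 2) * (B0 n u x) ^ 2 ≤ 0 ∧ B0 n u x ≤ 0 :=
      fun i => (hKmem i x).mp (hx i)
    have hsph : x ∈ Metric.sphere (0 : Fin (n + 1) → ℝ) 1 := (hx' 0).1
    have hble : B0 n u x ≤ 0 := (hx' 0).2.2
    have hlim : mink n x + (B0 n u x) ^ 2 ≤ 0 := by
      by_contra hpos
      push_neg at hpos
      obtain ⟨k, hk⟩ := exists_nat_gt ((B0 n u x) ^ 2 / (mink n x + (B0 n u x) ^ 2))
      have hkx := (hx' k).2.1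
      have hr1 : (((k : ℝ) + 1)⁻¹) ^ 2 ≤ ((k : ℝ) + 1)⁻¹ := by
        have hk0 : (0:ℝ) ≤ (k : ℝ) := Nat.cast_nonneg k
        have h1 : (1 : ℝ) ≤ (k : ℝ) + 1 := by linarith
        have h2 : ((k : ℝ) + 1)⁻¹ ≤ 1 := by
          have h2' := inv_anti₀ one_pos h1
          simpa using h2'
        have h3 : (0:ℝ) ≤ ((k : ℝ) + 1)⁻¹ := by positivity
        nlinarith
      have hbk : (B0 n u x) ^ 2 < (mink n x + (B0 n u x) ^ 2) * ((k : ℝ) + 1) := by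
        rw [div_lt_iff₀ hpos] at hk
        nlinarith [hpos]
      have hkpos : (0:ℝ) < (k : ℝ) + 1 := by positivity
      have h5 : ((k : ℝ) + 1)⁻¹ * (B0 n u x) ^ 2 < mink n x + (B0 n u x) ^ 2 := by
        rw [inv_mul_lt_iff₀ hkpos]
        nlinarith
      have h6 : (((k : ℝ) + 1)⁻¹) ^ 2 * (B0 n u x) ^ 2 ≤ ((k : ℝ) + 1)⁻¹ * (B0 n u x) ^ 2 :=
        mul_le_mul_of_nonneg_right hr1 (sq_nonneg _)
      nlinarith
    -- decompose x along u
    have hyperp : B0 n u (x + B0 n u x • u) = 0 := by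
      rw [B0_add_right, B0_smul_right, B0_self, hminku]
      ring
    have hminky : mink n (x + B0 n u x • u) ≤ 0 := by
      have heq : mink n (x + B0 n u x • u) = mink n x + (B0 n u x) ^ 2 := by
        rw [mink_add, mink_smul, hminku, B0_smul_right, B0_comm n x u]
        ring
      linarith
    have hy0 : x + B0 n u x • u = 0 :=
      mink_orth_eq_zero (by rw [hminku]; norm_num) hyperp hminky
    have hxab : x = (-(B0 n u x)) • u := by
      have hx' := eq_neg_of_add_eq_zero_left hy0
      rw [← neg_smul] at hx'
      exact hx'
    have hxne : x ≠ 0 := by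
      intro h0
      rw [Metric.mem_sphere] at hsph
      rw [h0] at hsph
      simp at hsph
    have hbne : -(B0 n u x) ≠ 0 := by
      intro h0
      rw [h0, zero_smul] at hxab
      exact hxne hxab
    have hbpos : 0 < -(B0 n u x) := lt_of_le_of_ne (by linarith) (Ne.symm hbne)
    rw [hxab]
    exact hUcone (-(B0 n u x)) hbpos u huU
  obtain ⟨k, hKU⟩ := exists_subset_nhds_of_isCompact' hKdir hKcpt hKclosed
    (fun x hx => hUopen.mem_nhds (hInter hx))
  clear hKcpt hKclosed hKmono hKdir hInter hUopen hQ'c hlXc hlX'c hB0c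
  -- the parameters
  obtain ⟨r, hr0, hr1, hrk⟩ : ∃ r : ℝ, 0 < r ∧ r ≤ 1 ∧ r = ((k : ℝ) + 1)⁻¹ := by
    refine ⟨((k : ℝ) + 1)⁻¹, by positivity, ?_, rfl⟩
    have hk0 : (0:ℝ) ≤ (k : ℝ) := Nat.cast_nonneg k
    have h1 : (1:ℝ) ≤ (k : ℝ) + 1 := by linarith
    have h2 := inv_anti₀ one_pos h1
    simpa using h2
  set C : ℝ := 1 - r ^ 2 with hC_def
  have hC0 : 0 ≤ C := by nlinarith
  have hC1 : C < 1 := by nlinarith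
  -- the linear functional and the squeezing map
  set L : V →ₗ[ℝ] ℝ := pfLin q w₁ with hL_def
  have hLpf : ∀ v, L v = polarForm q w₁ v := fun v => rfl
  clear_value L
  clear hL_def
  have hLw₁ : L w₁ = -1 := by rw [hLpf, pf_self, hqw₁]
  set f : V →ₗ[ℝ] V :=
    LinearMap.id + (1 - r) • ((LinearMap.toSpanSingleton ℝ V w₁).comp L) with hf_def
  set g : V →ₗ[ℝ] V :=
    LinearMap.id + ((r - 1) / r) • ((LinearMap.toSpanSingleton ℝ V w₁).comp L) with hg_def
  have hfapp : ∀ v, f v = v + ((1 - r) * L v) • w₁ := by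
    intro v
    simp [hf_def, LinearMap.add_apply, LinearMap.smul_apply, LinearMap.comp_apply,
      LinearMap.toSpanSingleton_apply, smul_smul]
  have hgapp : ∀ v, g v = v + ((r - 1) / r * L v) • w₁ := by
    intro v
    simp [hg_def, LinearMap.add_apply, LinearMap.smul_apply, LinearMap.comp_apply,
      LinearMap.toSpanSingleton_apply, smul_smul]
  have hLf : ∀ v, L (f v) = r * L v := by
    intro v
    rw [hfapp, map_add, map_smul, hLw₁, smul_eq_mul]
    ring
  have hLg : ∀ v, L (g v) = r⁻¹ * L v := by
    intro v
    rw [hgapp, map_add, map_smul, hLw₁, smul_eq_mul]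
    field_simp
    ring
  have hgf : g.comp f = LinearMap.id := by
    ext v
    rw [LinearMap.comp_apply, hgapp, hLf, hfapp, LinearMap.id_apply]
    rw [add_assoc, ← add_smul]
    have heq : (1 - r) * L v + (r - 1) / r * (r * L v) = 0 := by
      field_simp
      ring
    rw [heq, zero_smul, add_zero]
  have hfg : f.comp g = LinearMap.id := by
    ext v
    rw [LinearMap.comp_apply, hfapp, hLg, hgapp, LinearMap.id_apply]
    rw [add_assoc, ← add_smul]
    have heq : (r - 1) / r * L v + (1 - r) * (r⁻¹ * L v) = 0 := by
      field_simp
      ring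
    rw [heq, zero_smul, add_zero]
  clear_value f g
  clear hf_def hg_def
  set Te : V ≃ₗ[ℝ] V := LinearEquiv.ofLinear f g hfg hgf with hTe_def
  have hTeapp : ∀ v, Te v = f v := by
    intro v
    rw [hTe_def, LinearEquiv.ofLinear_apply]
  clear_value Te
  clear hTe_def
  set hQF : QuadraticForm ℝ V := q.comp f with hQF_def
  have hQFapp : ∀ v, hQF v = q (f v) := by
    intro v
    rw [hQF_def, QuadraticMap.comp_apply]
  clear_value hQF
  clear hQF_def
  have hval : ∀ v, hQF v = q v + C * (L v) ^ 2 := by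
    intro v
    rw [hQFapp, hfapp, pf_expand, QuadraticMap.map_smul,
      smul_eq_mul, hqw₁, pf_smul_right, pf_comm, ← hLpf v, hC_def]
    ring
  have hpf : ∀ v, polarForm hQF w₁ v = r ^ 2 * polarForm q w₁ v := by
    intro v
    unfold polarForm
    rw [hval (w₁ + v), hval w₁, hval v, pf_expand, map_add, hLw₁, hqw₁, ← hLpf v, hC_def]
    ring
  -- key pointwise fact
  have key : ∀ v : V, hQF v < 0 → L v ≤ 0 →
      q v < 0 ∧ polarForm q X v < 0 ∧ q' v < 0 ∧ polarForm q' X' v < 0 := by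
    intro v hv hLv
    have hqv : q v < 0 := by
      have := hval v
      nlinarith [sq_nonneg (L v), hC0]
    have hve : e (e.symm v) = v := e.apply_symm_apply v
    have hqx : mink n (e.symm v) = q v := by rw [← he (e.symm v), hve]
    have hLx : B0 n u (e.symm v) = L v := by rw [hLpf, ← pfB0 u (e.symm v), heu, hve]
    have hx0 : e.symm v ≠ 0 := by
      intro h0
      rw [h0, mink_zero] at hqx
      linarith
    have hm : 0 < ‖e.symm v‖ := norm_pos_iff.mpr hx0
    have hxm : e.symm v = ‖e.symm v‖ • (‖e.symm v‖⁻¹ • e.symm v) := by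
      rw [smul_smul, mul_inv_cancel₀ hm.ne', one_smul]
    have hsph : ‖e.symm v‖⁻¹ • e.symm v ∈ Metric.sphere (0 : Fin (n + 1) → ℝ) 1 := by
      rw [mem_sphere_zero_iff_norm, norm_smul, norm_inv, Real.norm_eq_abs, abs_of_pos hm]
      exact inv_mul_cancel₀ hm.ne'
    have hxhK : ‖e.symm v‖⁻¹ • e.symm v ∈ Kf k := by
      rw [hKmem]
      refine ⟨hsph, ?_, ?_⟩
      · rw [← hrk, mink_smul, B0_smul_right, hqx, hLx]
        have hhv := hval v
        have hmi : (0:ℝ) < ‖e.symm v‖⁻¹ ^ 2 := pow_pos (inv_pos.mpr hm) 2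
        have heq : ‖e.symm v‖⁻¹ ^ 2 * q v + (1 - r ^ 2) * (‖e.symm v‖⁻¹ * L v) ^ 2
            = ‖e.symm v‖⁻¹ ^ 2 * (q v + C * L v ^ 2) := by
          rw [hC_def]; ring
        rw [heq]
        nlinarith
      · rw [B0_smul_right, hLx]
        exact mul_nonpos_of_nonneg_of_nonpos (inv_pos.mpr hm).le hLv
    have hxhU := (hUmem _).mp (hKU hxhK)
    obtain ⟨hU1, hU2, hU3, hU4⟩ := hxhU
    have hpX : polarForm q X v = ‖e.symm v‖ * lX (‖e.symm v‖⁻¹ • e.symm v) := by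
      have hlx : lX (‖e.symm v‖⁻¹ • e.symm v) = ‖e.symm v‖⁻¹ * polarForm q X v := by
        rw [hlXapp, map_smul, pf_smul_right, hve]
      rw [hlx]
      field_simp
    have hq'v : q' v = (‖e.symm v‖ * ‖e.symm v‖) * q' (e (‖e.symm v‖⁻¹ • e.symm v)) := by
      have hq'x : q' (e (‖e.symm v‖⁻¹ • e.symm v))
          = ‖e.symm v‖⁻¹ * ‖e.symm v‖⁻¹ * q' v := by
        rw [map_smul, QuadraticMap.map_smul, smul_eq_mul, hve]
      rw [hq'x]
      field_simp
    have hpX' : polarForm q' X' v = ‖e.symm v‖ * lX' (‖e.symm v‖⁻¹ • e.symm v) := by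
      have hlx' : lX' (‖e.symm v‖⁻¹ • e.symm v) = ‖e.symm v‖⁻¹ * polarForm q' X' v := by
        rw [hlX'app, map_smul, pf_smul_right, hve]
      rw [hlx']
      field_simp
    refine ⟨hqv, ?_, ?_, ?_⟩
    · rw [hpX]; exact mul_neg_of_pos_of_neg hm hU2
    · rw [hq'v]; exact mul_neg_of_pos_of_neg (mul_pos hm hm) hU3
    · rw [hpX']; exact mul_neg_of_pos_of_neg hm hU4
  refine ⟨hQF, w₁, ?_, ?_, ?_, ?_, ?_⟩
  · -- IsLorentzian
    refine ⟨e.trans Te.symm, fun x => ?_⟩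
    have h1 : ((e.trans Te.symm) x) = Te.symm (e x) := rfl
    have h3 : f (Te.symm (e x)) = Te (Te.symm (e x)) := (hTeapp _).symm
    rw [h1, hQFapp, h3, Te.apply_symm_apply, he]
  · -- hQF w₁ < 0
    rw [hval w₁, hLw₁, hqw₁]
    nlinarith
  · -- main inclusion
    intro v hv
    obtain ⟨hv1, hv2⟩ := hv
    have hLv : L v ≤ 0 := by
      rw [hpf] at hv2
      have hlt : polarForm q w₁ v < 0 := by
        by_contra hcon
        push_neg at hcon
        nlinarith
      rw [hLpf]; linarith
    obtain ⟨h1, h2, h3, h4⟩ := key v hv1 hLv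
    exact ⟨⟨h1, h2⟩, h3, h4⟩
  · -- h < 0 ⊆ q < 0
    intro v hv
    have := hval v
    simp only [Set.mem_setOf_eq] at hv ⊢
    nlinarith [sq_nonneg (L v), hC0]
  · -- h < 0 ⊆ q' < 0
    intro v hv
    simp only [Set.mem_setOf_eq] at hv ⊢
    rcases le_or_gt (L v) 0 with hLv | hLv
    · exact (key v hv hLv).2.2.1
    · have hvneg : hQF (-v) < 0 := by rw [QuadraticMap.map_neg]; exact hv
      have hLneg : L (-v) ≤ 0 := by rw [map_neg]; linarith
      have hres := (key (-v) hvneg hLneg).2.2.1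
      rw [QuadraticMap.map_neg] at hres
      exact hres
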